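/- Let G be a group and M a finitely generated ℤ[G]-module. Then any two filling norms on M are linearly equivalent: if ‖·‖_η and ‖·‖_{η'} are filling norms on M induced by surjections η : F → M and η' : F' → M from based finitely generated free ℤ[G]-modules, then there exists a constant C > 0 such that ‖m‖_{η'} ≤ C·‖m‖_η and ‖m‖_η ≤ C·‖m‖_{η'} for all m ∈ M. -/

import Mathlib

/-- The ℓ1-norm on the based finitely generated free `ℤ[G]`-module `Fin r →₀ ℤ[G]`,
induced by the free `ℤ`-basis `{g • eᵢ}`: `‖x‖₁ = ∑_{i,g} |x_{i,g}|`. -/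
noncomputable def l1 {G : Type*} [Group G] {r : ℕ}
    (x : Fin r →₀ MonoidAlgebra ℤ G) : ℕ :=
  x.sum fun _ a => Finsupp.sum a.coeff fun _ z => z.natAbs

/-- The filling norm on `M` induced by a surjection `η` from a based finitely
generated free `ℤ[G]`-module: `‖m‖_η = min { ‖x‖₁ : η x = m }`. -/
noncomputable def fillNorm {G : Type*} [Group G] {r : ℕ}
    {M : Type*} [AddCommGroup M] [Module (MonoidAlgebra ℤ G) M]
    (η : (Fin r →₀ MonoidAlgebra ℤ G) →ₗ[MonoidAlgebra ℤ G] M) (m : M) : ℕ :=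
  sInf {n : ℕ | ∃ x, η x = m ∧ l1 x = n}

/-! ### Auxiliary norm on `α →₀ ℤ` -/

noncomputable def nuInt {α : Type*} (a : α →₀ ℤ) : ℕ := a.sum fun _ z => z.natAbs

lemma nuInt_eq_sum {α : Type*} (a : α →₀ ℤ) {s : Finset α} (hs : a.support ⊆ s) :
    nuInt a = ∑ g ∈ s, (a g).natAbs :=
  Finsupp.sum_of_support_subset a hs _ (fun _ _ => rfl)

lemma nuInt_zero {α : Type*} : nuInt (0 : α →₀ ℤ) = 0 := by
  simp [nuInt]

lemma nuInt_add_le {α : Type*} (a b : α →₀ ℤ) : nuInt (a + b) ≤ nuInt a + nuInt b := by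
  classical
  rw [nuInt_eq_sum (a + b) (Finsupp.support_add),
      nuInt_eq_sum a (Finset.subset_union_left (s₂ := b.support)),
      nuInt_eq_sum b (Finset.subset_union_right (s₁ := a.support)),
      ← Finset.sum_add_distrib]
  exact Finset.sum_le_sum fun i _ => by simpa using Int.natAbs_add_le (a i) (b i)

lemma nuInt_single {α : Type*} (g : α) (z : ℤ) : nuInt (Finsupp.single g z) = z.natAbs :=
  Finsupp.sum_single_index rfl

/-- Subadditivity over finite sums for any subadditive `ℕ`-valued function. -/
lemma natfun_sum_le {β : Type*} [AddCommMonoid β] (N : β → ℕ)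
    (h0 : N 0 = 0) (hadd : ∀ a b, N (a + b) ≤ N a + N b)
    {ι : Type*} (s : Finset ι) (f : ι → β) :
    N (∑ i ∈ s, f i) ≤ ∑ i ∈ s, N (f i) := by
  classical
  induction s using Finset.cons_induction with
  | empty => simp [h0]
  | cons i s hi ih =>
    rw [Finset.sum_cons, Finset.sum_cons]
    exact (hadd _ _).trans (Nat.add_le_add_left ih _)

lemma nuInt_mul_le {G : Type*} [Group G] (a b : MonoidAlgebra ℤ G) :
    nuInt (a * b).coeff ≤ nuInt a.coeff * nuInt b.coeff := by
  classical
  rw [MonoidAlgebra.mul_def]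
  simp only [Finsupp.sum, MonoidAlgebra.coeff_sum, MonoidAlgebra.coeff_single]
  calc nuInt (∑ g₁ ∈ a.coeff.support, ∑ g₂ ∈ b.coeff.support,
          Finsupp.single (g₁ * g₂) (a.coeff g₁ * b.coeff g₂))
      ≤ ∑ g₁ ∈ a.coeff.support, nuInt (∑ g₂ ∈ b.coeff.support,
          Finsupp.single (g₁ * g₂) (a.coeff g₁ * b.coeff g₂)) :=
        natfun_sum_le nuInt nuInt_zero nuInt_add_le _ _
    _ ≤ ∑ g₁ ∈ a.coeff.support, ∑ g₂ ∈ b.coeff.support,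
          nuInt (Finsupp.single (g₁ * g₂) (a.coeff g₁ * b.coeff g₂)) :=
        Finset.sum_le_sum fun g₁ _ => natfun_sum_le nuInt nuInt_zero nuInt_add_le _ _
    _ = ∑ g₁ ∈ a.coeff.support, ∑ g₂ ∈ b.coeff.support,
          (a.coeff g₁).natAbs * (b.coeff g₂).natAbs := by
        refine Finset.sum_congr rfl fun g₁ _ => Finset.sum_congr rfl fun g₂ _ => ?_
        rw [nuInt_single, Int.natAbs_mul]
    _ = nuInt a.coeff * nuInt b.coeff := by
        rw [nuInt_eq_sum a.coeff subset_rfl, nuInt_eq_sum b.coeff subset_rfl, Finset.sum_mul_sum]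

/-! ### Properties of `l1` -/

lemma l1_eq_sum {G : Type*} [Group G] {r : ℕ} (x : Fin r →₀ MonoidAlgebra ℤ G)
    {s : Finset (Fin r)} (hs : x.support ⊆ s) :
    l1 x = ∑ i ∈ s, nuInt (x i).coeff :=
  Finsupp.sum_of_support_subset x hs _ (fun _ _ => nuInt_zero)

lemma l1_zero {G : Type*} [Group G] {r : ℕ} : l1 (0 : Fin r →₀ MonoidAlgebra ℤ G) = 0 := by
  simp [l1]

lemma l1_add_le {G : Type*} [Group G] {r : ℕ} (u v : Fin r →₀ MonoidAlgebra ℤ G) :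
    l1 (u + v) ≤ l1 u + l1 v := by
  classical
  rw [l1_eq_sum (u + v) (Finsupp.support_add),
      l1_eq_sum u (Finset.subset_union_left (s₂ := v.support)),
      l1_eq_sum v (Finset.subset_union_right (s₁ := u.support)),
      ← Finset.sum_add_distrib]
  exact Finset.sum_le_sum fun i _ => by
    simpa using nuInt_add_le (u i).coeff (v i).coeff

lemma l1_smul_le {G : Type*} [Group G] {r : ℕ} (a : MonoidAlgebra ℤ G)
    (v : Fin r →₀ MonoidAlgebra ℤ G) : l1 (a • v) ≤ nuInt a.coeff * l1 v := by
  classical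
  rw [l1_eq_sum (a • v) (Finsupp.support_smul), l1_eq_sum v subset_rfl,
      Finset.mul_sum]
  refine Finset.sum_le_sum fun i _ => ?_
  have : (a • v) i = a * v i := rfl
  rw [this]
  exact nuInt_mul_le a (v i)

/-- Any `ℤ[G]`-linear map between based f.g. free modules is Lipschitz for `l1`. -/
lemma l1_map_le {G : Type*} [Group G] {r r' : ℕ}
    (φ : (Fin r →₀ MonoidAlgebra ℤ G) →ₗ[MonoidAlgebra ℤ G]
        (Fin r' →₀ MonoidAlgebra ℤ G)) :
    ∃ C : ℕ, ∀ x, l1 (φ x) ≤ C * l1 x := by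
  classical
  set C := ∑ i : Fin r, l1 (φ (Finsupp.single i 1)) with hC
  refine ⟨C, fun x => ?_⟩
  have hx : x = ∑ i ∈ x.support, (x i) • Finsupp.single i (1 : MonoidAlgebra ℤ G) := by
    conv_lhs => rw [← Finsupp.sum_single x]
    rw [Finsupp.sum]
    exact Finset.sum_congr rfl fun i _ => by rw [Finsupp.smul_single', mul_one]
  have hφx : φ x = ∑ i ∈ x.support, (x i) • φ (Finsupp.single i 1) := by
    conv_lhs => rw [hx]
    rw [map_sum]
    exact Finset.sum_congr rfl fun i _ => by rw [map_smul]
  calc l1 (φ x) ≤ ∑ i ∈ x.support, l1 ((x i) • φ (Finsupp.single i 1)) := by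
        rw [hφx]; exact natfun_sum_le l1 l1_zero l1_add_le _ _
    _ ≤ ∑ i ∈ x.support, nuInt (x i).coeff * l1 (φ (Finsupp.single i 1)) :=
        Finset.sum_le_sum fun i _ => l1_smul_le _ _
    _ ≤ ∑ i ∈ x.support, nuInt (x i).coeff * C := by
        refine Finset.sum_le_sum fun i _ => Nat.mul_le_mul_left _ ?_
        exact Finset.single_le_sum (f := fun j => l1 (φ (Finsupp.single j 1)))
          (fun _ _ => Nat.zero_le _) (Finset.mem_univ i)
    _ = (∑ i ∈ x.support, nuInt (x i).coeff) * C := by rw [Finset.sum_mul]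
    _ = C * l1 x := by rw [l1_eq_sum x subset_rfl, Nat.mul_comm]

/-- The left-linear map `r ↦ r • v` over a possibly noncommutative ring. -/
def spanMap {R M : Type*} [Semiring R] [AddCommMonoid M] [Module R M] (v : M) :
    R →ₗ[R] M where
  toFun r := r • v
  map_add' a b := add_smul a b v
  map_smul' a b := mul_smul a b v

/-! ### Properties of `fillNorm` -/

lemma fillNorm_exists {G : Type*} [Group G] {r : ℕ}
    {M : Type*} [AddCommGroup M] [Module (MonoidAlgebra ℤ G) M]
    (η : (Fin r →₀ MonoidAlgebra ℤ G) →ₗ[MonoidAlgebra ℤ G] M)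
    (hη : Function.Surjective η) (m : M) :
    ∃ x, η x = m ∧ l1 x = fillNorm η m := by
  have hne : {n : ℕ | ∃ x, η x = m ∧ l1 x = n}.Nonempty := by
    obtain ⟨x, hx⟩ := hη m
    exact ⟨l1 x, x, hx, rfl⟩
  exact Nat.sInf_mem hne

lemma fillNorm_le {G : Type*} [Group G] {r : ℕ}
    {M : Type*} [AddCommGroup M] [Module (MonoidAlgebra ℤ G) M]
    (η : (Fin r →₀ MonoidAlgebra ℤ G) →ₗ[MonoidAlgebra ℤ G] M)
    {m : M} {y : Fin r →₀ MonoidAlgebra ℤ G} (hy : η y = m) :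
    fillNorm η m ≤ l1 y :=
  Nat.sInf_le ⟨y, hy, rfl⟩

/-- One-sided comparison of filling norms. -/
lemma fillNorm_compare {G : Type*} [Group G]
    {M : Type*} [AddCommGroup M] [Module (MonoidAlgebra ℤ G) M]
    {r r' : ℕ}
    (η : (Fin r →₀ MonoidAlgebra ℤ G) →ₗ[MonoidAlgebra ℤ G] M)
    (hη : Function.Surjective η)
    (η' : (Fin r' →₀ MonoidAlgebra ℤ G) →ₗ[MonoidAlgebra ℤ G] M)
    (hη' : Function.Surjective η') :
    ∃ C : ℕ, ∀ m : M, fillNorm η' m ≤ C * fillNorm η m := by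
  classical
  choose y hy using fun i : Fin r => hη' (η (Finsupp.single i 1))
  let φ : (Fin r →₀ MonoidAlgebra ℤ G) →ₗ[MonoidAlgebra ℤ G]
      (Fin r' →₀ MonoidAlgebra ℤ G) :=
    Finsupp.lsum ℕ (fun i => spanMap (y i))
  have hφ : ∀ x, η' (φ x) = η x := by
    intro x
    have : η'.comp φ = η := by
      apply Finsupp.lhom_ext
      intro i a
      have h1 : φ (Finsupp.single i a) = a • y i := by
        simp [φ, Finsupp.lsum_single, spanMap]
      simp only [LinearMap.comp_apply, h1, map_smul, hy]
      rw [← map_smul, Finsupp.smul_single', mul_one]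
    exact congrArg (fun f => f x) this
  obtain ⟨C, hC⟩ := l1_map_le φ
  refine ⟨C, fun m => ?_⟩
  obtain ⟨x, hx, hl⟩ := fillNorm_exists η hη m
  calc fillNorm η' m ≤ l1 (φ x) := fillNorm_le η' (by rw [hφ, hx])
    _ ≤ C * l1 x := hC x
    _ = C * fillNorm η m := by rw [hl]

/-- Any two filling norms on a finitely generated `ℤ[G]`-module are linearly
equivalent. -/
theorem filling_norms_linearly_equivalent
    (G : Type*) [Group G]
    (M : Type*) [AddCommGroup M] [Module (MonoidAlgebra ℤ G) M]
    [Module.Finite (MonoidAlgebra ℤ G) M]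
    (r r' : ℕ)
    (η : (Fin r →₀ MonoidAlgebra ℤ G) →ₗ[MonoidAlgebra ℤ G] M)
    (hη : Function.Surjective η)
    (η' : (Fin r' →₀ MonoidAlgebra ℤ G) →ₗ[MonoidAlgebra ℤ G] M)
    (hη' : Function.Surjective η') :
    ∃ C : ℕ, 0 < C ∧ ∀ m : M,
      fillNorm η' m ≤ C * fillNorm η m ∧ fillNorm η m ≤ C * fillNorm η' m := by
  obtain ⟨C₁, h₁⟩ := fillNorm_compare η hη η' hη'
  obtain ⟨C₂, h₂⟩ := fillNorm_compare η' hη' η hη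
  refine ⟨C₁ + C₂ + 1, by omega, fun m => ⟨?_, ?_⟩⟩
  · exact (h₁ m).trans (Nat.mul_le_mul_right _ (by omega))
  · exact (h₂ m).trans (Nat.mul_le_mul_right _ (by omega))
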